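/- Let c, d, e be small categories, let F : (d ⥤ Type) ⥤ (c ⥤ Type) be familial with positions copresheaf F(1) and arities F[I] ∈ d ⥤ Type, and let G : (e ⥤ Type) ⥤ (d ⥤ Type) be familial with positions copresheaf G(1) ∈ d ⥤ Type and arities G[J] ∈ e ⥤ Type. Then the composite functor F ∘ G : (e ⥤ Type) ⥤ (c ⥤ Type) (first apply G, then F) is familial, with an isomorphism, natural in X and C: (F(G(X)))(C) ≅ Σ over pairs (I ∈ F(1)(C), J : F[I] ⟶ G(1) a morphism of d-copresheaves) of Hom_{e ⥤ Type}(colim_{z ∈ el(F[I])} G[J(z)], X), where the colimit is indexed by the category of elements of F[I]. -/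

import Mathlib

namespace Fam
open CategoryTheory Opposite Limits
private lemma sigmaExt {α : Type} {β : α → Type} {a a' : α} {b : β a} {b' : β a'}
    (h : a = a') (h' : HEq b b') : (⟨a, b⟩ : Σ x, β x) = ⟨a', b'⟩ := by
  subst h; cases h'; rfl
variable {c d : Type} [SmallCategory c] [SmallCategory d]
def elHom (pos : c ⥤ Type) {C C' : c} (f : C ⟶ C') (I : pos.obj C) :
    pos.elementsMk C I ⟶ pos.elementsMk C' (pos.map f I) :=
  CategoryOfElements.homMk _ _ f rfl
lemma eqToHom_val {pos : c ⥤ Type} {x y : pos.Elements} (E : x = y) :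
    (eqToHom E).val = eqToHom (congrArg Sigma.fst E) := by
  subst E; simp
@[simps]
def famApply (pos : c ⥤ Type) (ar : pos.Elementsᵒᵖ ⥤ d ⥤ Type) :
    (d ⥤ Type) ⥤ c ⥤ Type where
  obj X :=
    { obj := fun C => Σ I : pos.obj C, ar.obj (op (pos.elementsMk C I)) ⟶ X
      map := fun {C C'} f => TypeCat.ofHom fun x => ⟨pos.map f x.1, ar.map (elHom pos f x.1).op ≫ x.2⟩
      map_id := by
        intro C
        refine ConcreteCategory.hom_ext _ _ fun x => ?_
        obtain ⟨I, g⟩ := x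
        have h : pos.map (𝟙 C) I = I := by simp
        have hE : pos.elementsMk C I = pos.elementsMk C (pos.map (𝟙 C) I) := by rw [h]
        have he : elHom pos (𝟙 C) I = eqToHom hE := by
          apply CategoryOfElements.ext
          rw [eqToHom_val]
          simp [elHom]
        dsimp
        refine sigmaExt h ?_
        rw [he]
        simp [eqToHom_op, eqToHom_map]
      map_comp := by
        intro C C' C'' f g
        refine ConcreteCategory.hom_ext _ _ fun x => ?_
        obtain ⟨I, u⟩ := x
        have h : pos.map (f ≫ g) I = pos.map g (pos.map f I) := by simp
        have hE : pos.elementsMk C'' (pos.map (f ≫ g) I)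
            = pos.elementsMk C'' (pos.map g (pos.map f I)) := by rw [h]
        have hcomp : elHom pos f I ≫ elHom pos g (pos.map f I)
            = elHom pos (f ≫ g) I ≫ eqToHom hE := by
          apply CategoryOfElements.ext
          rw [CategoryOfElements.comp_val, CategoryOfElements.comp_val, eqToHom_val]
          simp [elHom]
        dsimp
        refine sigmaExt h ?_
        rw [← Category.assoc, ← ar.map_comp, ← op_comp, hcomp, op_comp, ar.map_comp,
          Category.assoc]
        simp [eqToHom_op, eqToHom_map] }
  map {X Y} t :=
    { app := fun C => TypeCat.ofHom fun x => ⟨x.1, x.2 ≫ t⟩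
      naturality := by
        intro C C' f
        refine ConcreteCategory.hom_ext _ _ fun x => ?_
        dsimp
        rw [Category.assoc] }
  map_id := by
    intro X
    apply NatTrans.ext
    funext C; refine ConcreteCategory.hom_ext _ _ fun x => ?_
    dsimp
    rw [Category.comp_id]
  map_comp := by
    intro X Y Z s t
    apply NatTrans.ext
    funext C; refine ConcreteCategory.hom_ext _ _ fun x => ?_
    dsimp
    rw [Category.assoc]

/-- The unit exhibiting `famApply pos (ar ⋙ G)` as the right coclosure `⌈F/G⌉`,
i.e. the left Kan extension of the familial functor `F = famApply pos ar` along `G`. -/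
def coclosureUnit {e : Type} [SmallCategory e] (pos : c ⥤ Type)
    (ar : pos.Elementsᵒᵖ ⥤ e ⥤ Type) (G : (e ⥤ Type) ⥤ d ⥤ Type) :
    famApply pos ar ⟶ G ⋙ famApply pos (ar ⋙ G) where
  app X :=
    { app := fun C => TypeCat.ofHom fun x => ⟨x.1, G.map x.2⟩
      naturality := by
        intro C C' f
        refine ConcreteCategory.hom_ext _ _ fun x => ?_
        show (⟨pos.map f x.1, G.map (ar.map (elHom pos f x.1).op ≫ x.2)⟩ :
            Σ I : pos.obj C', (ar ⋙ G).obj (op (pos.elementsMk C' I)) ⟶ G.obj X)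
          = ⟨pos.map f x.1, G.map (ar.map (elHom pos f x.1).op) ≫ G.map x.2⟩
        rw [G.map_comp] }
  naturality := by
    intro X Y t
    apply NatTrans.ext
    funext C; refine ConcreteCategory.hom_ext _ _ fun x => ?_
    show (⟨x.1, G.map (x.2 ≫ t)⟩ :
        Σ I : pos.obj C, (ar ⋙ G).obj (op (pos.elementsMk C I)) ⟶ G.obj Y)
      = ⟨x.1, G.map x.2 ≫ G.map t⟩
    rw [G.map_comp]

section Statement8

variable {c d e : Type} [SmallCategory c] [SmallCategory d] [SmallCategory e]

/-- Positions of the composite `F ∘ G` of familial functors: pairs of a position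
`I ∈ F(1)(C)` and a morphism of `d`-copresheaves `J : F[I] ⟶ G(1)`; i.e. the copresheaf
`F(G(1)) = (famApply posF arF).obj posG`. -/
def compPos (posF : c ⥤ Type) (arF : posF.Elementsᵒᵖ ⥤ d ⥤ Type) (posG : d ⥤ Type) :
    c ⥤ Type :=
  (famApply posF arF).obj posG

/-- The diagram `z ↦ G[J(z)]`, indexed by (the opposite of) the category of elements of the
arity `F[I]`, whose colimit is the arity of the composite `F ∘ G` at the position `(I, J)`. -/
def compDiagram {posF : c ⥤ Type} (arF : posF.Elementsᵒᵖ ⥤ d ⥤ Type) {posG : d ⥤ Type}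
    (arG : posG.Elementsᵒᵖ ⥤ e ⥤ Type) (el : (compPos posF arF posG).Elements) :
    ((arF.obj (op (posF.elementsMk el.1 el.2.1))).Elements)ᵒᵖ ⥤ e ⥤ Type :=
  (CategoryOfElements.map el.2.2).op ⋙ arG

section Aux

variable {e : Type} [SmallCategory e]

lemma eqToHom_comp_dep {C₀ : Type _} [Category C₀] {α : Sort _} (g : α → C₀) {X : C₀}
    (s : ∀ a, g a ⟶ X) {a a' : α} (h : a' = a) (h2 : g a' = g a) :
    eqToHom h2 ≫ s a = s a' := by
  subst h; simp

lemma eqToHom_comp_dep₂ {C₀ : Type _} [Category C₀] {α : Sort _} (g : α → C₀) {W X : C₀}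
    (s : ∀ a, g a ⟶ X) {a a' : α} (h : a = a') (h1 : W = g a) (h2 : W = g a') :
    eqToHom h1 ≫ s a = eqToHom h2 ≫ s a' := by
  subst h; subst h1; simp

lemma sigma_snd {pos : c ⥤ Type} {V : pos.Elementsᵒᵖ ⥤ d ⥤ Type} {T : d ⥤ Type} {C : c}
    {b b' : pos.obj C} {u : V.obj (op (pos.elementsMk C b)) ⟶ T}
    {u' : V.obj (op (pos.elementsMk C b')) ⟶ T}
    (h : (⟨b, u⟩ : Σ I : pos.obj C, V.obj (op (pos.elementsMk C I)) ⟶ T) = ⟨b', u'⟩)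
    (hb : pos.elementsMk C b' = pos.elementsMk C b) :
    u' = eqToHom (congrArg (fun z => V.obj (op z)) hb) ≫ u := by
  have hb' : b = b' := congrArg Sigma.fst h
  subst hb'
  have hu : u = u' := by
    simpa using h
  subst hu
  simp

lemma mk_sigma {pos : c ⥤ Type} {V : pos.Elementsᵒᵖ ⥤ d ⥤ Type} {T : d ⥤ Type} {C : c}
    {b b' : pos.obj C} {u : V.obj (op (pos.elementsMk C b)) ⟶ T}
    {u' : V.obj (op (pos.elementsMk C b')) ⟶ T} (hb : b = b')
    (hu : u = eqToHom (congrArg (fun t => V.obj (op (pos.elementsMk C t))) hb) ≫ u') :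
    (⟨b, u⟩ : Σ I : pos.obj C, V.obj (op (pos.elementsMk C I)) ⟶ T) = ⟨b', u'⟩ := by
  subst hb; rw [hu]; simp

lemma ar_conj {pos : c ⥤ Type} (ar : pos.Elementsᵒᵖ ⥤ d ⥤ Type)
    {p q p' q' : pos.Elements} (hp : p = p') (hq : q = q')
    {u : p ⟶ q} {u' : p' ⟶ q'}
    (hval : u.val = eqToHom (congrArg Sigma.fst hp) ≫ u'.val ≫
      eqToHom (congrArg Sigma.fst hq).symm) :
    ar.map u.op ≫ eqToHom (congrArg (fun t => ar.obj (op t)) hp)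
      = eqToHom (congrArg (fun t => ar.obj (op t)) hq) ≫ ar.map u'.op := by
  subst hp; subst hq
  have : u = u' := CategoryOfElements.ext _ _ _ (by simpa using hval)
  subst this
  simp

lemma famApply_obj_map' (pos : c ⥤ Type) (ar : pos.Elementsᵒᵖ ⥤ d ⥤ Type) (X : d ⥤ Type)
    {C C' : c} (f : C ⟶ C') (x : ((famApply pos ar).obj X).obj C) :
    ((famApply pos ar).obj X).map f x
      = ⟨pos.map f x.1, ar.map (elHom pos f x.1).op ≫ x.2⟩ :=
  rfl

lemma famApply_map_app' (pos : c ⥤ Type) (ar : pos.Elementsᵒᵖ ⥤ d ⥤ Type) {X Y : d ⥤ Type}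
    (t : X ⟶ Y) (C : c) (x : ((famApply pos ar).obj X).obj C) :
    ((famApply pos ar).map t).app C x = ⟨x.1, x.2 ≫ t⟩ :=
  rfl

end Aux
section ArComp

variable {e : Type} [SmallCategory e]
variable (posF : c ⥤ Type) (arF : posF.Elementsᵒᵖ ⥤ d ⥤ Type) (posG : d ⥤ Type)
  (arG : posG.Elementsᵒᵖ ⥤ e ⥤ Type)

/-- The morphism of `posF`-elements underlying a morphism of elements of the composite
positions presheaf. -/
def elF {x y : (compPos posF arF posG).Elements} (m : x ⟶ y) :
    posF.elementsMk x.1 x.2.1 ⟶ posF.elementsMk y.1 y.2.1 :=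
  elHom posF m.val x.2.1 ≫
    eqToHom (by rw [show posF.map m.val x.2.1 = y.2.1 from congrArg Sigma.fst m.property])

lemma elF_id (x : (compPos posF arF posG).Elements) : elF posF arF posG (𝟙 x) = 𝟙 _ := by
  apply CategoryOfElements.ext
  rw [elF, CategoryOfElements.comp_val, eqToHom_val]
  simp [elHom]

lemma elF_comp {x y z : (compPos posF arF posG).Elements} (m : x ⟶ y) (n : y ⟶ z) :
    elF posF arF posG (m ≫ n) = elF posF arF posG m ≫ elF posF arF posG n := by
  apply CategoryOfElements.ext
  simp only [elF, CategoryOfElements.comp_val, eqToHom_val]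
  simp [elHom]

/-- The map on arities induced by a morphism of elements of the composite positions. -/
def kk {x y : (compPos posF arF posG).Elements} (m : x ⟶ y) :
    arF.obj (op (posF.elementsMk y.1 y.2.1)) ⟶ arF.obj (op (posF.elementsMk x.1 x.2.1)) :=
  arF.map (elF posF arF posG m).op

lemma kk_spec {x y : (compPos posF arF posG).Elements} (m : x ⟶ y) :
    y.2.2 = kk posF arF posG m ≫ x.2.2 := by
  have h := sigma_snd (V := arF) (T := posG)
    (b := posF.map m.val x.2.1) (b' := y.2.1)
    (u := arF.map (elHom posF m.val x.2.1).op ≫ x.2.2) (u' := y.2.2)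
    m.property (by rw [show posF.map m.val x.2.1 = y.2.1 from congrArg Sigma.fst m.property])
  rw [h, kk, elF, op_comp, Functor.map_comp, Category.assoc, eqToHom_op, eqToHom_map]

lemma kk_id (x : (compPos posF arF posG).Elements) :
    kk posF arF posG (𝟙 x) = 𝟙 _ := by
  rw [kk, elF_id]; simp

lemma kk_comp {x y z : (compPos posF arF posG).Elements} (m : x ⟶ y) (n : y ⟶ z) :
    kk posF arF posG (m ≫ n) = kk posF arF posG n ≫ kk posF arF posG m := by
  rw [kk, elF_comp, op_comp, Functor.map_comp]; rfl

/-- Transport of elements of `F[I']` along a morphism of composite positions. -/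
abbrev kel {x y : (compPos posF arF posG).Elements} (m : x ⟶ y)
    (z : (arF.obj (op (posF.elementsMk y.1 y.2.1))).Elements) :
    (arF.obj (op (posF.elementsMk x.1 x.2.1))).Elements :=
  (CategoryOfElements.map (kk posF arF posG m)).obj z

lemma mapel_eq {x y : (compPos posF arF posG).Elements} (m : x ⟶ y)
    (z : (arF.obj (op (posF.elementsMk y.1 y.2.1))).Elements) :
    (CategoryOfElements.map y.2.2).obj z
      = (CategoryOfElements.map x.2.2).obj (kel posF arF posG m z) :=
  congrArg (fun t => (CategoryOfElements.map t).obj z) (kk_spec posF arF posG m)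

lemma dObj_eq {x y : (compPos posF arF posG).Elements} (m : x ⟶ y)
    (z : (arF.obj (op (posF.elementsMk y.1 y.2.1))).Elements) :
    (compDiagram arF arG y).obj (op z)
      = (compDiagram arF arG x).obj (op (kel posF arF posG m z)) :=
  congrArg (fun t => arG.obj (op t)) (mapel_eq posF arF posG m z)

/-- The cocone used to define functoriality of the composite arities. -/
noncomputable def compMapCocone {x y : (compPos posF arF posG).Elements} (m : x ⟶ y) :
    Limits.Cocone (compDiagram arF arG y) where
  pt := Limits.colimit (compDiagram arF arG x)
  ι :=
    { app := fun zz => eqToHom (dObj_eq posF arF posG arG m zz.unop) ≫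
        Limits.colimit.ι (compDiagram arF arG x) (op (kel posF arF posG m zz.unop))
      naturality := by
        intro w w' g
        have e1 : eqToHom (congrArg Sigma.fst (mapel_eq posF arF posG m (unop w'))) = 𝟙 _ :=
          rfl
        have e2 : eqToHom (congrArg Sigma.fst (mapel_eq posF arF posG m (unop w))).symm
            = 𝟙 _ := rfl
        have hconj : (compDiagram arF arG y).map g ≫
              eqToHom (dObj_eq posF arF posG arG m (unop w'))
            = eqToHom (dObj_eq posF arF posG arG m (unop w)) ≫
              (compDiagram arF arG x).map
                ((CategoryOfElements.map (kk posF arF posG m)).map g.unop).op :=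
          ar_conj arG (mapel_eq posF arF posG m (unop w'))
            (mapel_eq posF arF posG m (unop w))
            (by rw [e1, e2]; simp [CategoryOfElements.map]; exact (Category.comp_id _).symm.trans (Category.id_comp _).symm)
        rw [← Category.assoc, hconj, Category.assoc,
          Limits.colimit.w (compDiagram arF arG x)
            ((CategoryOfElements.map (kk posF arF posG m)).map g.unop).op]
        simp }


/-- The arities of the composite of two familial functors. -/
noncomputable def arComp : (compPos posF arF posG).Elementsᵒᵖ ⥤ e ⥤ Type where
  obj xx := Limits.colimit (compDiagram arF arG xx.unop)
  map mm := Limits.colimit.desc _ (compMapCocone posF arF posG arG mm.unop)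
  map_id := by
    intro xx
    apply Limits.colimit.hom_ext
    intro j
    erw [Limits.colimit.ι_desc, Category.comp_id]
    have hz : kel posF arF posG (𝟙 xx.unop) j.unop = j.unop := by
      show (CategoryOfElements.map (kk posF arF posG (𝟙 xx.unop))).obj j.unop = j.unop
      rw [kk_id]
      simp [CategoryOfElements.map]
      rfl
    exact eqToHom_comp_dep (fun t => (compDiagram arF arG xx.unop).obj t)
      (Limits.colimit.ι (compDiagram arF arG xx.unop)) (congrArg op hz.symm) _
  map_comp := by
    intro aa bb cc mm nn
    apply Limits.colimit.hom_ext
    intro j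
    erw [Limits.colimit.ι_desc, ← Category.assoc, Limits.colimit.ι_desc]
    dsimp only [compMapCocone]
    rw [Category.assoc, Limits.colimit.ι_desc]
    dsimp only [compMapCocone]
    rw [← Category.assoc, eqToHom_trans]
    have hz : kel posF arF posG (nn.unop ≫ mm.unop) j.unop
        = kel posF arF posG nn.unop (kel posF arF posG mm.unop j.unop) := by
      show (CategoryOfElements.map (kk posF arF posG (nn.unop ≫ mm.unop))).obj j.unop = _
      rw [kk_comp]
      rfl
    exact eqToHom_comp_dep₂ (fun t => (compDiagram arF arG cc.unop).obj t)
      (Limits.colimit.ι (compDiagram arF arG cc.unop)) (congrArg op hz) _ _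
/-- The `posG`-component of a morphism from an arity into `(famApply posG arG).obj X`. -/
def posPart {X : e ⥤ Type} {C : c} {I : posF.obj C}
    (φ : arF.obj (op (posF.elementsMk C I)) ⟶ (famApply posG arG).obj X) :
    arF.obj (op (posF.elementsMk C I)) ⟶ posG where
  app D := TypeCat.ofHom fun a => (φ.app D a).1
  naturality D D' f := by
    refine ConcreteCategory.hom_ext _ _ fun a => ?_
    exact congrArg Sigma.fst (ConcreteCategory.congr_hom (φ.naturality f) a)

/-- The cocone on the composite diagram induced by a morphism from an arity into
`(famApply posG arG).obj X`. -/
def phiCocone {X : e ⥤ Type} {C : c} {I : posF.obj C}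
    (φ : arF.obj (op (posF.elementsMk C I)) ⟶ (famApply posG arG).obj X) :
    Limits.Cocone (compDiagram arF arG
      ((compPos posF arF posG).elementsMk C ⟨I, posPart posF arF posG arG φ⟩)) where
  pt := X
  ι :=
    { app := fun zz => (φ.app zz.unop.1 zz.unop.2).2
      naturality := by
        intro w w' g
        have h0 : φ.app (unop w).1 (unop w).2
            = ((famApply posG arG).obj X).map g.unop.val (φ.app (unop w').1 (unop w').2) := by
          have h1 := ConcreteCategory.congr_hom (φ.naturality g.unop.val) (unop w').2
          exact (congrArg (φ.app (unop w).1) g.unop.property).symm.trans h1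
        have hq0 : (CategoryOfElements.map (posPart posF arF posG arG φ)).obj (unop w)
            = posG.elementsMk (unop w).1
              (posG.map g.unop.val (φ.app (unop w').1 (unop w').2).1) :=
          congrArg (fun t => posG.elementsMk (unop w).1 t) (congrArg Sigma.fst h0)
        have hs := sigma_snd (pos := posG) (V := arG) (T := X) h0.symm hq0
        have key : (compDiagram arF arG
              ((compPos posF arF posG).elementsMk C ⟨I, posPart posF arF posG arG φ⟩)).map g
            = eqToHom (congrArg (fun t => arG.obj (op t)) hq0) ≫
              arG.map (elHom posG g.unop.val (φ.app (unop w').1 (unop w').2).1).op := by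
          have := ar_conj arG
            (p := (CategoryOfElements.map (posPart posF arF posG arG φ)).obj (unop w'))
            (q := (CategoryOfElements.map (posPart posF arF posG arG φ)).obj (unop w))
            (p' := posG.elementsMk (unop w').1 (φ.app (unop w').1 (unop w').2).1)
            (q' := posG.elementsMk (unop w).1
              (posG.map g.unop.val (φ.app (unop w').1 (unop w').2).1))
            (u := (CategoryOfElements.map (posPart posF arF posG arG φ)).map g.unop)
            (u' := elHom posG g.unop.val (φ.app (unop w').1 (unop w').2).1)
            (hp := rfl) (hq := hq0)
            (hval := by
              have e1 : eqToHom (congrArg Sigma.fst (rfl :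
                  (CategoryOfElements.map (posPart posF arF posG arG φ)).obj (unop w')
                    = posG.elementsMk (unop w').1 (φ.app (unop w').1 (unop w').2).1)) = 𝟙 _ :=
                rfl
              have e2 : eqToHom (congrArg Sigma.fst hq0).symm = 𝟙 _ := rfl
              erw [e1, e2]
              simp [CategoryOfElements.map, elHom])
          exact (Category.comp_id _).symm.trans this
        erw [key, Category.assoc, ← hs]
        simp
        exact (Category.comp_id _).symm }

/-- Reconstructing a morphism into `(famApply posG arG).obj X` from a morphism out of the
colimit of the composite diagram. -/
noncomputable def unPos {X : e ⥤ Type} {C : c} (I : posF.obj C)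
    (J : arF.obj (op (posF.elementsMk C I)) ⟶ posG)
    (t : Limits.colimit (compDiagram arF arG
      ((compPos posF arF posG).elementsMk C ⟨I, J⟩)) ⟶ X) :
    arF.obj (op (posF.elementsMk C I)) ⟶ (famApply posG arG).obj X where
  app D := TypeCat.ofHom fun a => ⟨J.app D a,
    Limits.colimit.ι (compDiagram arF arG ((compPos posF arF posG).elementsMk C ⟨I, J⟩))
      (op ((arF.obj (op (posF.elementsMk C I))).elementsMk D a)) ≫ t⟩
  naturality D D' f := by
    refine ConcreteCategory.hom_ext _ _ fun a => ?_
    have hw := Limits.colimit.w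
      (compDiagram arF arG ((compPos posF arF posG).elementsMk C ⟨I, J⟩))
      (elHom (arF.obj (op (posF.elementsMk C I))) f a).op
    have hJ : J.app D' ((arF.obj (op (posF.elementsMk C I))).map f a)
        = posG.map f (J.app D a) := ConcreteCategory.congr_hom (J.naturality f) a
    have key : (compDiagram arF arG ((compPos posF arF posG).elementsMk C ⟨I, J⟩)).map
          (elHom (arF.obj (op (posF.elementsMk C I))) f a).op
        = eqToHom (congrArg (fun t => arG.obj (op (posG.elementsMk D' t))) hJ) ≫
          arG.map (elHom posG f (J.app D a)).op := by
      have := ar_conj arG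
        (p := (CategoryOfElements.map J).obj
          ((arF.obj (op (posF.elementsMk C I))).elementsMk D a))
        (q := (CategoryOfElements.map J).obj
          ((arF.obj (op (posF.elementsMk C I))).elementsMk D'
            ((arF.obj (op (posF.elementsMk C I))).map f a)))
        (p' := posG.elementsMk D (J.app D a))
        (q' := posG.elementsMk D' (posG.map f (J.app D a)))
        (u := (CategoryOfElements.map J).map
          (elHom (arF.obj (op (posF.elementsMk C I))) f a))
        (u' := elHom posG f (J.app D a))
        (hp := rfl) (hq := congrArg (fun t => posG.elementsMk D' t) hJ)
        (hval := by
          have e1 : eqToHom (congrArg Sigma.fst (rfl :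
              (CategoryOfElements.map J).obj
                ((arF.obj (op (posF.elementsMk C I))).elementsMk D a)
                = posG.elementsMk D (J.app D a))) = 𝟙 _ := rfl
          have e2 : eqToHom (congrArg Sigma.fst
              (congrArg (fun t => posG.elementsMk D' t) hJ)).symm = 𝟙 _ := rfl
          erw [e1, e2]
          simp [CategoryOfElements.map, elHom])
      exact (Category.comp_id _).symm.trans this
    refine mk_sigma (pos := posG) (V := arG) (T := X) hJ ?_
    erw [← hw, Category.assoc, key, Category.assoc]
lemma arComp_map {xx yy : (compPos posF arF posG).Elementsᵒᵖ} (mm : xx ⟶ yy) :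
    (arComp posF arF posG arG).map mm
      = Limits.colimit.desc _ (compMapCocone posF arF posG arG mm.unop) :=
  rfl

lemma elF_elHom {C C' : c} (f : C ⟶ C') (p : (compPos posF arF posG).obj C) :
    elF posF arF posG (elHom (compPos posF arF posG) f p) = elHom posF f p.1 :=
  CategoryOfElements.ext _ _ _ (Category.comp_id _)

lemma kel_elHom {C C' : c} (f : C ⟶ C') (p : (compPos posF arF posG).obj C)
    (z : (arF.obj (op (posF.elementsMk C' (posF.map f p.1)))).Elements) :
    kel posF arF posG (elHom (compPos posF arF posG) f p) z
      = ⟨z.1, (arF.map (elHom posF f p.1).op).app z.1 z.2⟩ := by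
  show (CategoryOfElements.map
    (arF.map (elF posF arF posG (elHom (compPos posF arF posG) f p)).op)).obj z = _
  rw [elF_elHom]
  rfl

/-- The forward comparison map for the composite of familial functors. -/
noncomputable def fwdNat : famApply posG arG ⋙ famApply posF arF ⟶
    famApply (compPos posF arF posG) (arComp posF arF posG arG) where
  app X :=
    { app := fun C => TypeCat.ofHom fun x => ⟨⟨x.1, posPart posF arF posG arG x.2⟩,
        Limits.colimit.desc _ (phiCocone posF arF posG arG x.2)⟩
      naturality := by
        intro C C' f
        refine ConcreteCategory.hom_ext _ _ fun x => ?_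
        obtain ⟨I, φ⟩ := x
        show (⟨⟨posF.map f I, posPart posF arF posG arG (arF.map (elHom posF f I).op ≫ φ)⟩,
            Limits.colimit.desc _
              (phiCocone posF arF posG arG (arF.map (elHom posF f I).op ≫ φ))⟩ :
            Σ p : (compPos posF arF posG).obj C',
              (arComp posF arF posG arG).obj
                (op ((compPos posF arF posG).elementsMk C' p)) ⟶ X)
          = ⟨⟨posF.map f I, arF.map (elHom posF f I).op ≫ posPart posF arF posG arG φ⟩,
              (arComp posF arF posG arG).map
                (elHom (compPos posF arF posG) f ⟨I, posPart posF arF posG arG φ⟩).op ≫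
                Limits.colimit.desc _ (phiCocone posF arF posG arG φ)⟩
        refine sigmaExt rfl (heq_of_eq ?_)
        apply Limits.colimit.hom_ext
        intro j
        rw [Limits.colimit.ι_desc]
        dsimp only [phiCocone]
        erw [arComp_map, ← Category.assoc]
        erw [Limits.colimit.ι_desc]
        dsimp only [compMapCocone]
        erw [Category.assoc]
        erw [Limits.colimit.ι_desc]
        dsimp only [phiCocone]
        simp only [NatTrans.comp_app, types_comp_apply]
        have hk := (kel_elHom posF arF posG f ⟨I, posPart posF arF posG arG φ⟩ (unop j)).symm
        exact (eqToHom_comp_dep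
          (fun z : (arF.obj (op (posF.elementsMk C I))).Elements =>
            arG.obj (op (posG.elementsMk z.1 ((φ.app z.1 z.2).1))))
          (fun z => (φ.app z.1 z.2).2) hk
          (dObj_eq posF arF posG arG
            (elHom (compPos posF arF posG) f ⟨I, posPart posF arF posG arG φ⟩)
            (unop j))).symm }
  naturality := by
    intro X Y t
    apply NatTrans.ext
    funext C; refine ConcreteCategory.hom_ext _ _ fun x => ?_
    refine sigmaExt rfl (heq_of_eq ?_)
    apply Limits.colimit.hom_ext
    intro j
    erw [Limits.colimit.ι_desc, ← Category.assoc, Limits.colimit.ι_desc]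
    dsimp only [phiCocone]
    rfl

/-- The backward comparison map for the composite of familial functors. -/
noncomputable def bwdNat : famApply (compPos posF arF posG) (arComp posF arF posG arG) ⟶
    famApply posG arG ⋙ famApply posF arF where
  app X :=
    { app := fun C => TypeCat.ofHom fun y => ⟨y.1.1, unPos posF arF posG arG y.1.1 y.1.2 y.2⟩
      naturality := by
        intro C C' f
        refine ConcreteCategory.hom_ext _ _ fun y => ?_
        obtain ⟨⟨I, J⟩, t⟩ := y
        show (⟨posF.map f I, unPos posF arF posG arG (posF.map f I)
              (arF.map (elHom posF f I).op ≫ J)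
              ((arComp posF arF posG arG).map
                (elHom (compPos posF arF posG) f ⟨I, J⟩).op ≫ t)⟩ :
            Σ I' : posF.obj C', arF.obj (op (posF.elementsMk C' I')) ⟶
              (famApply posG arG).obj X)
          = ⟨posF.map f I, arF.map (elHom posF f I).op ≫ unPos posF arF posG arG I J t⟩
        refine sigmaExt rfl (heq_of_eq ?_)
        apply NatTrans.ext
        funext D; refine ConcreteCategory.hom_ext _ _ fun a => ?_
        simp only [NatTrans.comp_app, types_comp_apply]
        dsimp only [unPos]
        refine sigmaExt rfl (heq_of_eq ?_)
        erw [arComp_map, ← Category.assoc]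
        erw [Limits.colimit.ι_desc]
        dsimp only [compMapCocone]
        erw [Category.assoc]
        have hk := (kel_elHom posF arF posG (C' := C') f ⟨I, J⟩ ⟨D, a⟩).symm
        exact eqToHom_comp_dep
          (fun z => (compDiagram arF arG
            ((compPos posF arF posG).elementsMk C ⟨I, J⟩)).obj (op z))
          (fun z => Limits.colimit.ι
            (compDiagram arF arG ((compPos posF arF posG).elementsMk C ⟨I, J⟩)) (op z) ≫ t)
          hk
          (dObj_eq posF arF posG arG (elHom (compPos posF arF posG) f ⟨I, J⟩) ⟨D, a⟩)
      }
  naturality := by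
    intro X Y t
    apply NatTrans.ext
    funext C; refine ConcreteCategory.hom_ext _ _ fun y => ?_
    rfl

/-- The comparison isomorphism. -/
noncomputable def mainIso : famApply posG arG ⋙ famApply posF arF ≅
    famApply (compPos posF arF posG) (arComp posF arF posG arG) where
  hom := fwdNat posF arF posG arG
  inv := bwdNat posF arF posG arG
  hom_inv_id := by
    apply NatTrans.ext
    funext X
    apply NatTrans.ext
    funext C; refine ConcreteCategory.hom_ext _ _ fun x => ?_
    dsimp only [NatTrans.comp_app, types_comp_apply, NatTrans.id_app, types_id_apply,
      fwdNat, bwdNat]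
    refine sigmaExt rfl (heq_of_eq ?_)
    apply NatTrans.ext
    funext D; refine ConcreteCategory.hom_ext _ _ fun a => ?_
    dsimp only [unPos, posPart]
    refine sigmaExt rfl (heq_of_eq ?_)
    exact Limits.colimit.ι_desc _ _
  inv_hom_id := by
    apply NatTrans.ext
    funext X
    apply NatTrans.ext
    funext C; refine ConcreteCategory.hom_ext _ _ fun y => ?_
    dsimp only [NatTrans.comp_app, types_comp_apply, NatTrans.id_app, types_id_apply,
      fwdNat, bwdNat]
    refine sigmaExt rfl (heq_of_eq ?_)
    apply Limits.colimit.hom_ext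
    intro j
    erw [Limits.colimit.ι_desc]
    dsimp only [phiCocone, unPos]
    rfl
end ArComp
/-- The composite `G ⋙ F` ("first `G`, then `F`") of familial functors
`F : (d ⥤ Type) ⥤ (c ⥤ Type)` and `G : (e ⥤ Type) ⥤ (d ⥤ Type)` is familial, with positions
copresheaf `F(G(1))` — whose elements over `C` are pairs `(I ∈ F(1)(C), J : F[I] ⟶ G(1))` —
and with arity at `(I, J)` the colimit `colim_{z ∈ el(F[I])} G[J(z)]`; so that, naturally in
`X` and `C`,
`F(G(X))(C) ≅ Σ_{(I, J)} Hom_{e ⥤ Type}(colim_{z ∈ el(F[I])} G[J(z)], X)`. -/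
theorem comp_familial
    (F : (d ⥤ Type) ⥤ c ⥤ Type) (posF : c ⥤ Type)
    (arF : posF.Elementsᵒᵖ ⥤ d ⥤ Type) (eF : famApply posF arF ≅ F)
    (G : (e ⥤ Type) ⥤ d ⥤ Type) (posG : d ⥤ Type)
    (arG : posG.Elementsᵒᵖ ⥤ e ⥤ Type) (eG : famApply posG arG ≅ G) :
    ∃ arComp : (compPos posF arF posG).Elementsᵒᵖ ⥤ e ⥤ Type,
      (∀ el : (compPos posF arF posG).Elements,
        Nonempty (arComp.obj (op el) ≅ Limits.colimit (compDiagram arF arG el))) ∧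
      Nonempty (G ⋙ F ≅ famApply (compPos posF arF posG) arComp) := by
  refine ⟨arComp posF arF posG arG, fun el => ⟨Iso.refl _⟩, ⟨?_⟩⟩
  exact Functor.isoWhiskerRight eG.symm F ≪≫ Functor.isoWhiskerLeft (famApply posG arG) eF.symm ≪≫
    mainIso posF arF posG arG

end Statement8

end Fam
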